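/- Let X be a nonempty finite set, n ≥ 1, and let W₁, W₂ : X × X → ℝ be two channels; for x, y ∈ Xⁿ set Pr_{Wᵢ}(x|y) = ∏_{j=1}^n Wᵢ(x_j, y_j). The following are equivalent: (i) for every nonempty subset C ⊆ Xⁿ and every x ∈ Xⁿ, the set {c ∈ C : Pr_{W₁}(x|c') ≤ Pr_{W₁}(x|c) for all c' ∈ C} equals the set {c ∈ C : Pr_{W₂}(x|c') ≤ Pr_{W₂}(x|c) for all c' ∈ C}; (ii) for all x, y, z ∈ Xⁿ, Pr_{W₁}(x|y) ≤ Pr_{W₁}(x|z) if and only if Pr_{W₂}(x|y) ≤ Pr_{W₂}(x|z); (iii) for all x, y ∈ Xⁿ, the cardinality of {z ∈ Xⁿ : Pr_{W₁}(x|z) < Pr_{W₁}(x|y)} equals the cardinality of {z ∈ Xⁿ : Pr_{W₂}(x|z) < Pr_{W₂}(x|y)}. -/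
import Mathlib


/-- Transition probability of the `n`-fold extension of a discrete memoryless
channel `W` with finite alphabet `X`: `prW W x y = Pr_W(x|y)`. -/
noncomputable def prW {X : Type*} (W : X → X → ℝ) {n : ℕ} (x y : Fin n → X) : ℝ :=
  ∏ j, W (x j) (y j)

theorem stmt14 {X : Type*} [Fintype X] [Nonempty X] (n : ℕ) (hn : 1 ≤ n)
    (W₁ W₂ : X → X → ℝ) :
    ((∀ C : Set (Fin n → X), C.Nonempty → ∀ x : Fin n → X,
        {c ∈ C | ∀ c' ∈ C, prW W₁ x c' ≤ prW W₁ x c} =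
        {c ∈ C | ∀ c' ∈ C, prW W₂ x c' ≤ prW W₂ x c}) ↔
      (∀ x y z : Fin n → X, (prW W₁ x y ≤ prW W₁ x z ↔ prW W₂ x y ≤ prW W₂ x z))) ∧
    ((∀ x y z : Fin n → X, (prW W₁ x y ≤ prW W₁ x z ↔ prW W₂ x y ≤ prW W₂ x z)) ↔
      (∀ x y : Fin n → X,
        {z : Fin n → X | prW W₁ x z < prW W₁ x y}.ncard =
        {z : Fin n → X | prW W₂ x z < prW W₂ x y}.ncard)) := by
  have rank : ∀ (g : (Fin n → X) → ℝ) (y z : Fin n → X),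
      g y ≤ g z ↔ {w | g w < g y}.ncard ≤ {w | g w < g z}.ncard := by
    intro g y z
    constructor
    · intro h
      exact Set.ncard_le_ncard (fun w hw => lt_of_lt_of_le hw h)
        (Set.toFinite _)
    · intro h
      by_contra hc
      push_neg at hc
      have hss : {w | g w < g z} ⊂ {w | g w < g y} := by
        constructor
        · exact fun w hw => lt_trans hw hc
        · intro hsub
          have := hsub hc; simp at this
      exact absurd h (not_le.mpr (Set.ncard_lt_ncard hss (Set.toFinite _)))
  constructor
  · constructor
    · intro h x y z
      have h2 := h {y, z} ⟨y, by simp⟩ x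
      constructor
      · intro h1
        have hz : z ∈ {c ∈ ({y, z} : Set (Fin n → X)) | ∀ c' ∈ ({y, z} : Set (Fin n → X)),
            prW W₁ x c' ≤ prW W₁ x c} := by
          refine ⟨by simp, ?_⟩
          rintro c' (rfl | rfl) <;> simp [h1]
        rw [h2] at hz
        exact hz.2 y (by simp)
      · intro h1
        have hz : z ∈ {c ∈ ({y, z} : Set (Fin n → X)) | ∀ c' ∈ ({y, z} : Set (Fin n → X)),
            prW W₂ x c' ≤ prW W₂ x c} := by
          refine ⟨by simp, ?_⟩
          rintro c' (rfl | rfl) <;> simp [h1]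
        rw [← h2] at hz
        exact hz.2 y (by simp)
    · intro h C hC x
      ext c
      simp only [Set.mem_setOf_eq]
      exact and_congr_right fun _ => forall₂_congr fun c' _ => h x c' c
  · constructor
    · intro h x y
      congr 1
      ext z
      simp only [Set.mem_setOf_eq, ← not_le]
      exact not_congr (h x y z)
    · intro h x y z
      rw [rank (prW W₁ x), h x y, h x z, ← rank (prW W₂ x)]
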